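/- Let d : ℝ → ℝ be an additive function and let α, β ∈ ℝ satisfy α < 0 < β. If d(tanh(x)) = (1/cosh²(x))·d(x) holds for all x ∈ (α, β), then d is a standard derivation. -/

import Mathlib

/-- If an additive function `d` derivates `tanh` on `(α, β)` with `α < 0 < β`,
then `d` is a standard derivation. -/
theorem stmt_11 (d : ℝ → ℝ) (hd : ∀ x y : ℝ, d (x + y) = d x + d y)
    (α β : ℝ) (h1 : α < 0) (h2 : 0 < β)
    (h : ∀ x ∈ Set.Ioo α β, d (Real.tanh x) = (1 / (Real.cosh x) ^ 2) * d x) :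
    ∀ x y : ℝ, d (x * y) = d x * y + x * d y := by
  -- basic additive facts
  have d0 : d 0 = 0 := by have := hd 0 0; simpa using this
  have dneg : ∀ x, d (-x) = - d x := by
    intro x
    have := hd x (-x); simp [d0] at this; linarith
  have dq : ∀ (q : ℚ) (x : ℝ), d ((q:ℝ) * x) = (q:ℝ) * d x := by
    intro q x
    have := map_rat_smul (AddMonoidHom.mk' d hd) q x
    simpa [Rat.smul_def] using this
  -- tanh facts
  have tanh_sq : ∀ x : ℝ, 1 / Real.cosh x ^ 2 = 1 - Real.tanh x ^ 2 := by
    intro x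
    have hc : Real.cosh x ≠ 0 := (Real.cosh_pos x).ne'
    have hcs := Real.cosh_sq_sub_sinh_sq x
    rw [Real.tanh_eq_sinh_div_cosh]
    field_simp
    linarith
  have tanh_add : ∀ x y : ℝ,
      Real.tanh (x+y) * (1 + Real.tanh x * Real.tanh y) = Real.tanh x + Real.tanh y := by
    intro x y
    have hcx : Real.cosh x ≠ 0 := (Real.cosh_pos x).ne'
    have hcy : Real.cosh y ≠ 0 := (Real.cosh_pos y).ne'
    have hcxy : Real.cosh (x+y) ≠ 0 := (Real.cosh_pos (x+y)).ne'
    rw [Real.tanh_eq_sinh_div_cosh, Real.tanh_eq_sinh_div_cosh, Real.tanh_eq_sinh_div_cosh]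
    field_simp
    rw [Real.sinh_add, Real.cosh_add]
    ring
  -- interval setup
  set ε : ℝ := min (-α) β / 2 with hεdef
  have hε : 0 < ε := by
    have : 0 < min (-α) β := lt_min (by linarith) h2
    positivity
  have hmem : ∀ z : ℝ, |z| < 2*ε → z ∈ Set.Ioo α β := by
    intro z hz
    rw [abs_lt] at hz
    have hα : 2*ε ≤ -α := by
      have := min_le_left (-α) β; rw [hεdef]; linarith
    have hβ : 2*ε ≤ β := by
      have := min_le_right (-α) β; rw [hεdef]; linarith
    exact ⟨by linarith, by linarith⟩
  set δ : ℝ := Real.tanh ε with hδdef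
  have hδ : 0 < δ := by
    rw [hδdef, Real.tanh_eq_sinh_div_cosh]
    exact div_pos (by rwa [Real.sinh_pos_iff]) (Real.cosh_pos ε)
  -- surjectivity of tanh onto (-δ, δ) from (-ε, ε)
  have surj : ∀ u : ℝ, |u| < δ → ∃ x, |x| < ε ∧ Real.tanh x = u := by
    intro u hu
    have hcont : ContinuousOn Real.tanh (Set.Icc (-ε) ε) := by
      apply Continuous.continuousOn
      have : Real.tanh = fun x => Real.sinh x / Real.cosh x :=
        funext fun x => Real.tanh_eq_sinh_div_cosh x
      rw [this]
      exact Real.continuous_sinh.div Real.continuous_cosh fun x => (Real.cosh_pos x).ne'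
    have habs := abs_lt.1 hu
    have humem : u ∈ Set.Icc (Real.tanh (-ε)) (Real.tanh ε) := by
      rw [Real.tanh_neg, ← hδdef]
      exact ⟨by linarith [habs.1], by linarith [habs.2]⟩
    obtain ⟨x, hx, hxu⟩ := intermediate_value_Icc (by linarith : -ε ≤ ε) hcont humem
    refine ⟨x, ?_, hxu⟩
    rcases hx with ⟨hx1, hx2⟩
    rw [abs_lt]
    constructor
    · rcases lt_or_eq_of_le hx1 with h' | h'
      · linarith
      · exfalso
        have : u = -δ := by rw [hδdef, ← hxu, ← h', Real.tanh_neg]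
        linarith [habs.1]
    · rcases lt_or_eq_of_le hx2 with h' | h'
      · exact h'
      · exfalso
        have : u = δ := by rw [hδdef, ← hxu, h']
        linarith [habs.2]
  -- key algebraic lemma
  have core : ∀ s t w X Y ds dt dw : ℝ,
      w * (1 + s*t) = s + t →
      dw = (1 - w^2) * (X + Y) →
      (1 + s*t) * dw = ds + dt →
      ds = (1 - s^2) * X → dt = (1 - t^2) * Y →
      (s + t) * (t * ds + s * dt) = 0 := by
    intro s t w X Y ds dt dw h5 h3 h4 hh1 hh2
    subst hh1 hh2
    have key : (1+s*t)^2 * dw = ((1+s*t)^2 - (s+t)^2) * (X+Y) := by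
      linear_combination ((1+s*t)^2) * h3 - ((X+Y)*(w*(1+s*t)+(s+t))) * h5
    have e : (1+s*t) * ((1 - s^2) * X + (1 - t^2) * Y) = ((1+s*t)^2-(s+t)^2)*(X+Y) := by
      linear_combination key - (1+s*t)*h4
    linear_combination e
  -- small inversion lemma
  have small : ∀ u : ℝ, u ≠ 0 → |u| < δ → d (1/u) = - d u / u^2 := by
    intro u hu0 hud
    obtain ⟨r, hr0, hrlt⟩ := exists_rat_btwn (mul_pos (abs_pos.2 hu0) hδ)
    set t : ℝ := (r:ℝ) / u with htdef
    have ht0 : t ≠ 0 := div_ne_zero hr0.ne' hu0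
    have htd : |t| < δ := by
      rw [htdef, abs_div, div_lt_iff₀ (abs_pos.2 hu0), abs_of_pos hr0]
      linarith [hrlt]
    obtain ⟨x, hx, hxu⟩ := surj u hud
    obtain ⟨y, hy, hyt⟩ := surj t htd
    have hxI : x ∈ Set.Ioo α β := hmem x (by rw [abs_lt] at hx ⊢; exact ⟨by linarith [hx.1], by linarith [hx.2]⟩)
    have hyI : y ∈ Set.Ioo α β := hmem y (by rw [abs_lt] at hy ⊢; exact ⟨by linarith [hy.1], by linarith [hy.2]⟩)
    have hxyI : x + y ∈ Set.Ioo α β := by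
      apply hmem
      calc |x + y| ≤ |x| + |y| := abs_add_le x y
        _ < 2*ε := by linarith
    have hut : u * t = (r:ℝ) := by rw [htdef]; field_simp
    have hP : (1:ℝ) + u*t ≠ 0 := by rw [hut]; positivity
    have E1 : d u = (1 - u^2) * d x := by
      have := h x hxI; rw [tanh_sq x, hxu] at this; exact this
    have E2 : d t = (1 - t^2) * d y := by
      have := h y hyI; rw [tanh_sq y, hyt] at this; exact this
    have E3 : d (Real.tanh (x+y)) = (1 - (Real.tanh (x+y))^2) * (d x + d y) := by
      have := h (x+y) hxyI; rw [tanh_sq (x+y), hd x y] at this; exact this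
    have E5 : Real.tanh (x+y) * (1 + u * t) = u + t := by
      have := tanh_add x y; rw [hxu, hyt] at this; exact this
    have E4 : (1 + u*t) * d (Real.tanh (x+y)) = d u + d t := by
      have hq : (((1+r):ℚ):ℝ) = 1 + u*t := by push_cast; rw [hut]
      have hw : Real.tanh (x+y) = ((((1+r)⁻¹):ℚ):ℝ) * (u + t) := by
        rw [Rat.cast_inv, hq, inv_mul_eq_div, eq_div_iff hP]
        exact E5
      rw [hw, dq, Rat.cast_inv, hq, ← hd]
      field_simp
    have key := core u t (Real.tanh (x+y)) (d x) (d y) (d u) (d t) (d (Real.tanh (x+y)))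
      E5 E3 E4 E1 E2
    have hst : u + t ≠ 0 := by
      intro hc
      have : t = -u := by linarith
      rw [this] at hut
      nlinarith [sq_nonneg u, hr0, hut]
    have key2 : t * d u + u * d t = 0 := by
      rcases mul_eq_zero.1 key with h' | h'
      · exact absurd h' hst
      · exact h'
    have hdt : d t = (r:ℝ) * d (1/u) := by
      rw [htdef, div_eq_mul_inv, ← one_div, dq]
    rw [hdt, htdef] at key2
    have hr0' : (r:ℝ) ≠ 0 := hr0.ne'
    field_simp at key2
    have h2 : (r:ℝ) * (d u + u^2 * d (1/u)) = 0 := by linear_combination key2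
    have h3 := (mul_eq_zero.1 h2).resolve_left hr0'
    rw [eq_div_iff (pow_ne_zero 2 hu0)]
    linarith
  -- global inversion
  have dinv : ∀ v : ℝ, v ≠ 0 → d (1/v) = - d v / v^2 := by
    intro v hv
    obtain ⟨q, hq0, hql⟩ := exists_rat_btwn (div_pos hδ (abs_pos.2 hv))
    set u : ℝ := (q:ℝ) * v with hudef
    have hu0 : u ≠ 0 := mul_ne_zero hq0.ne' hv
    have hud : |u| < δ := by
      rw [hudef, abs_mul, abs_of_pos hq0]
      calc (q:ℝ) * |v| < (δ/|v|) * |v| := by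
            exact mul_lt_mul_of_pos_right hql (abs_pos.2 hv)
        _ = δ := by field_simp
    have hs := small u hu0 hud
    have h1u : 1/u = ((q⁻¹:ℚ):ℝ) * (1/v) := by
      rw [Rat.cast_inv, hudef]
      field_simp
    rw [h1u, dq, Rat.cast_inv, hudef, dq] at hs
    have hq0' : (q:ℝ) ≠ 0 := hq0.ne'
    field_simp at hs
    have h2 : (q:ℝ)^2 * (v^2 * d (1/v) + d v) = 0 := by linear_combination (q:ℝ)^2 * hs
    have h3 := (mul_eq_zero.1 h2).resolve_left (pow_ne_zero 2 hq0')
    rw [eq_div_iff (pow_ne_zero 2 hv)]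
    linarith
  have d1 : d 1 = 0 := by
    have := dinv 1 one_ne_zero
    norm_num at this
    linarith
  -- the square identity
  have dsq : ∀ x : ℝ, d (x^2) = 2*x*(d x) := by
    intro x
    rcases eq_or_ne x 0 with rfl | hx0
    · norm_num [d0]
    rcases eq_or_ne x 1 with rfl | hx1
    · norm_num [d1]
    have hx1' : x - 1 ≠ 0 := sub_ne_zero.2 hx1
    have hk : x^2 - x ≠ 0 := by
      intro hc
      apply hx1'
      have hm : x*(x-1) = 0 := by linear_combination hc
      rcases mul_eq_zero.1 hm with h' | h'
      exacts [absurd h' hx0, h']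
    have e0 : (1:ℝ)/(x^2-x) = 1/(x-1) + -(1/x) := by
      field_simp
      ring
    have e1 : d (1/(x^2-x)) = d (1/(x-1)) + -(d (1/x)) := by
      rw [e0, hd, dneg]
    rw [dinv _ hk, dinv _ hx1', dinv _ hx0] at e1
    have e2 : d (x-1) = d x := by
      have h' := hd (x-1) 1
      have hxx : x - 1 + 1 = x := by ring
      rw [hxx, d1] at h'
      linarith
    have e3 : d (x^2-x) = d (x^2) - d x := by
      have h' := hd (x^2) (-x)
      rw [dneg] at h'
      have hxx : x^2 + -x = x^2 - x := by ring
      rw [hxx] at h'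
      linarith
    rw [e2, e3] at e1
    field_simp at e1
    have hne : ((x-1)^2 * x^2) ≠ 0 := mul_ne_zero (pow_ne_zero 2 hx1') (pow_ne_zero 2 hx0)
    have hfac : ((x-1)^2*x^2) * ((d x - d (x^2)) - (-(d x * x^2) + d x * (x-1)^2)) = 0 := by
      linear_combination ((x-1)^2*x^2) * e1
    have h3 := (mul_eq_zero.1 hfac).resolve_left hne
    linear_combination -h3
  -- conclusion
  intro x y
  have e : d ((x+y)^2) = d (x^2) + (d (x*y) + (d (x*y) + d (y^2))) := by
    rw [show (x+y)^2 = x^2 + (x*y + (x*y + y^2)) from by ring, hd, hd, hd]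
  have hh1 := dsq (x+y)
  rw [hd x y] at hh1
  have hh2 := dsq x
  have hh3 := dsq y
  linear_combination (hh1 - e - hh2 - hh3)/2
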